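/- For a Bayesian network with evidence E and junction tree, the total evidence probability is obtained at any single cluster r: P(E) = ∑_{X_{C_r}} Φ_r(X_{C_r}) ∏_{i ∈ n(r)} M_{i→r}(X_{S_{ir}}). -/

import Mathlib

open Finset
open scoped Classical

/-- A junction tree for a Bayesian network with variable index set `U`:
a tree of clusters `C i ⊆ U` (indexed by `I`) satisfying the covering property
(via a cluster assignment `cl` with `fa(u) = {u} ∪ pa(u) ⊆ C (cl u)`) and the
running-intersection property. -/
structure JT (U : Type) [Fintype U] [DecidableEq U] (I : Type) [Fintype I] where
  /-- the tree on clusters -/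
  G : SimpleGraph I
  tree : G.IsTree
  /-- the clusters -/
  C : I → Finset U
  /-- the parent sets of the DAG of the Bayesian network -/
  pa : U → Finset U
  /-- the cluster assignment -/
  cl : U → I
  /-- covering: the family fa(u) of each variable is contained in its assigned cluster -/
  cover : ∀ u : U, insert u (pa u) ⊆ C (cl u)
  /-- running intersection -/
  runInter : ∀ i j : I, ∀ pth : G.Path i j, ∀ k ∈ pth.1.support, C i ∩ C j ⊆ C k

/-- The upstream set U_{i→j} : variables whose assigned cluster lies on the `i` side
of the edge i–j, i.e. `i` is on the path from `cl u` to `j`. -/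
noncomputable def upSet {U I : Type} [Fintype U] [DecidableEq U] [Fintype I]
    (J : JT U I) (i j : I) : Finset U :=
  Finset.univ.filter fun u => ∃ pth : J.G.Path (J.cl u) j, i ∈ pth.1.support

/-- The separator S_{ij} = C i ∩ C j of an edge. -/
def sep {U I : Type} [Fintype U] [DecidableEq U] [Fintype I]
    (J : JT U I) (i j : I) : Finset U := J.C i ∩ J.C j

/-- Marginal of a nonnegative function `f` on assignments: sum of `f` over all
assignments agreeing with `x` on the coordinates in `A`. -/
noncomputable def margOn {U : Type} [Fintype U] [DecidableEq U] {D : U → Type}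
    [∀ u, Fintype (D u)] [∀ u, DecidableEq (D u)]
    (f : (∀ u, D u) → ℝ) (A : Finset U) (x : ∀ u, D u) : ℝ :=
  ∑ z : ∀ u, D u, if ∀ v ∈ A, z v = x v then f z else 0

/-- The message M_{i→j}(X_{S_ij}) = ∑_{X_{V_{i→j}}} ∏_{u ∈ U_{i→j}} K_u, realized as a sum
over full assignments agreeing with `x` outside V_{i→j} = U_{i→j} \ S_{ij}. -/
noncomputable def msg {U I : Type} [Fintype U] [DecidableEq U] [Fintype I]
    (J : JT U I) {D : U → Type} [∀ u, Fintype (D u)] [∀ u, DecidableEq (D u)]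
    (K : (u : U) → (∀ v, D v) → ℝ) (i j : I) (x : ∀ u, D u) : ℝ :=
  ∑ z : ∀ u, D u,
    if ∀ v, v ∉ upSet J i j \ sep J i j → z v = x v
    then ∏ u ∈ upSet J i j, K u z else 0

/-- The neighbor set n(j) of a cluster in the junction tree. -/
noncomputable def nbr {U I : Type} [Fintype U] [DecidableEq U] [Fintype I]
    (J : JT U I) (j : I) : Finset I :=
  Finset.univ.filter fun i => J.G.Adj i j

/-- The cluster potential Φ_j = ∏_{u : cl u = j} K_u. -/
noncomputable def pot {U I : Type} [Fintype U] [DecidableEq U] [Fintype I]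
    (J : JT U I) {D : U → Type} [∀ u, Fintype (D u)] [∀ u, DecidableEq (D u)]
    (K : (u : U) → (∀ v, D v) → ℝ) (j : I) (x : ∀ u, D u) : ℝ :=
  ∏ u ∈ Finset.univ.filter (fun u => J.cl u = j), K u x


section Graph
variable {I : Type} {G : SimpleGraph I}

lemma path_unique (hT : G.IsTree) {a b : I} {p q : G.Walk a b}
    (hp : p.IsPath) (hq : q.IsPath) : p = q :=
  (hT.existsUnique_path a b).unique hp hq

lemma edge_isPath {i r : I} (h : G.Adj i r) :
    (SimpleGraph.Walk.cons h SimpleGraph.Walk.nil : G.Walk i r).IsPath := by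
  rw [SimpleGraph.Walk.cons_isPath_iff]
  exact ⟨SimpleGraph.Walk.IsPath.nil, by simp [h.ne]⟩

/-- support of the drop of a path at an r-neighbor is the edge. -/
lemma drop_nbr_support (hT : G.IsTree) {a r i : I} (p : G.Walk a r) (hp : p.IsPath)
    (hi : i ∈ p.support) (h : G.Adj i r) :
    (p.dropUntil i hi).support = [i, r] := by
  have := path_unique hT (hp.dropUntil hi) (edge_isPath h)
  rw [this]; simp

/-- full support of a path ending in an adjacent start. -/
lemma support_of_adj_start (hT : G.IsTree) {a r : I} (p : G.Walk a r) (hp : p.IsPath)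
    (h : G.Adj a r) : p.support = [a, r] := by
  have := path_unique hT hp (edge_isPath h)
  rw [this]; simp

/-- a path to `r` contains at most one neighbor of `r`. -/
lemma unique_nbr (hT : G.IsTree) {r : I} :
    ∀ {a : I} (p : G.Walk a r), p.IsPath → ∀ {i i' : I}, G.Adj i r → G.Adj i' r →
      i ∈ p.support → i' ∈ p.support → i = i' := by
  intro a p
  induction p with
  | nil =>
    intro _ i i' h _ hi _
    rw [SimpleGraph.Walk.mem_support_nil_iff] at hi
    subst hi
    exact absurd h (G.loopless.irrefl _)
  | cons hadj q ih =>
    intro hp i i' h h' hi hi'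
    rw [SimpleGraph.Walk.support_cons, List.mem_cons] at hi hi'
    rcases hi with rfl | hi
    · have hs := support_of_adj_start hT _ hp h
      have hmem : i' ∈ (SimpleGraph.Walk.cons hadj q).support := by
        rw [SimpleGraph.Walk.support_cons]
        rcases hi' with rfl | hi'
        · exact List.mem_cons_self
        · exact List.mem_cons_of_mem _ hi'
      rw [hs] at hmem
      simp only [List.mem_cons, List.mem_singleton, List.not_mem_nil, or_false] at hmem
      rcases hmem with rfl | rfl
      · rfl
      · exact absurd h' (G.loopless.irrefl _)
    · rcases hi' with rfl | hi'
      · have hs := support_of_adj_start hT _ hp h'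
        have hmem : i ∈ (SimpleGraph.Walk.cons hadj q).support := by
          rw [SimpleGraph.Walk.support_cons]
          exact List.mem_cons_of_mem _ hi
        rw [hs] at hmem
        simp only [List.mem_cons, List.mem_singleton, List.not_mem_nil, or_false] at hmem
        rcases hmem with rfl | rfl
        · rfl
        · exact absurd h (G.loopless.irrefl _)
      · exact ih hp.of_cons h h' hi hi'

/-- `dropUntil` at the start of a cons is the whole walk. -/
lemma dropUntil_cons_start {a b r : I} (hadj : G.Adj a b) (q : G.Walk b r)
    (h : a ∈ (SimpleGraph.Walk.cons hadj q).support) :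
    (SimpleGraph.Walk.cons hadj q).dropUntil a h = SimpleGraph.Walk.cons hadj q := by
  simp [SimpleGraph.Walk.dropUntil]

lemma dropUntil_cons_ne {a b r k : I} (hadj : G.Adj a b) (q : G.Walk b r)
    (h : k ∈ (SimpleGraph.Walk.cons hadj q).support) (hne : a ≠ k)
    (hq : k ∈ q.support) :
    (SimpleGraph.Walk.cons hadj q).dropUntil k h = q.dropUntil k hq := by
  simp [SimpleGraph.Walk.dropUntil, hne]

/-- if a path to `r` contains the `r`-neighbor `i` and an interior vertex `k`, the
drop at `k` still contains `i`. -/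
lemma mem_dropUntil_of_nbr (hT : G.IsTree) {r : I} :
    ∀ {a : I} (p : G.Walk a r), p.IsPath → ∀ {i k : I}, G.Adj i r →
      i ∈ p.support → (hk : k ∈ p.support) → k ≠ r → k ≠ i →
      i ∈ (p.dropUntil k hk).support := by
  intro a p
  induction p with
  | nil =>
    intro _ i k _ _ hk hkr _
    rw [SimpleGraph.Walk.mem_support_nil_iff] at hk
    exact absurd hk hkr
  | @cons a b c hadj q ih =>
    intro hp i k h hi hk hkr hki
    have hpath := (SimpleGraph.Walk.cons_isPath_iff hadj q).1 hp
    have hk' := hk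
    rw [SimpleGraph.Walk.support_cons, List.mem_cons] at hk'
    rcases hk' with rfl | hkq
    · rw [dropUntil_cons_start]
      exact hi
    · by_cases hia : i = a
      · subst hia
        have hs := support_of_adj_start hT _ hp h
        rw [hs] at hk
        simp only [List.mem_cons, List.mem_singleton, List.not_mem_nil, or_false] at hk
        rcases hk with rfl | rfl
        · exact absurd rfl hki
        · exact absurd rfl hkr
      · have hi' : i ∈ q.support := by
          rw [SimpleGraph.Walk.support_cons, List.mem_cons] at hi
          rcases hi with rfl | hi
          · exact absurd rfl hia
          · exact hi
        have hne : a ≠ k := fun e => hpath.2 (e ▸ hkq)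
        rw [dropUntil_cons_ne hadj q hk hne hkq]
        exact ih hpath.1 h hi' hkq hkr hki

/-- two branches through distinct neighbors of `r` meet only at `r`. -/
lemma branches_disjoint (hT : G.IsTree) {r i i' a b : I} (hne : i ≠ i')
    (hi : G.Adj i r) (hi' : G.Adj i' r)
    (p : G.Walk a r) (hp : p.IsPath) (hip : i' ∈ p.support)
    (q : G.Walk b r) (hq : q.IsPath) (hiq : i ∈ q.support)
    {k : I} (hkp : k ∈ p.support) (hkq : k ∈ q.support) : k = r := by
  by_contra hkr
  by_cases hki' : k = i'
  · subst hki'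
    exact hne (unique_nbr hT q hq hi hi' hiq hkq)
  · have h1 : i' ∈ (p.dropUntil k hkp).support :=
      mem_dropUntil_of_nbr hT p hp hi' hip hkp hkr hki'
    have heq : p.dropUntil k hkp = q.dropUntil k hkq :=
      path_unique hT (hp.dropUntil hkp) (hq.dropUntil hkq)
    rw [heq] at h1
    have h2 : i' ∈ q.support := SimpleGraph.Walk.support_dropUntil_subset q hkq h1
    exact hne (unique_nbr hT q hq hi hi' hiq h2)

/-- the concatenated two-branch path. -/
lemma two_branch_path (hT : G.IsTree) {r i i' a b : I} (hne : i ≠ i')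
    (hi : G.Adj i r) (hi' : G.Adj i' r)
    (p : G.Walk a r) (hp : p.IsPath) (hip : i' ∈ p.support)
    (q : G.Walk b r) (hq : q.IsPath) (hiq : i ∈ q.support) :
    ∃ w : G.Walk a b, w.IsPath ∧ r ∈ w.support ∧ i' ∈ w.support := by
  refine ⟨p.append q.reverse, ?_, ?_, ?_⟩
  · rw [SimpleGraph.Walk.isPath_def, SimpleGraph.Walk.support_append]
    rw [List.nodup_append]
    refine ⟨hp.support_nodup, ?_, ?_⟩
    · have : q.reverse.support.Nodup := hq.reverse.support_nodup
      exact this.tail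
    · intro v hvp w hvt hvw; subst hvw
      have hvq : v ∈ q.support := by
        have := List.tail_subset q.reverse.support hvt
        rwa [SimpleGraph.Walk.support_reverse, List.mem_reverse] at this
      have hvr : v = r := branches_disjoint hT hne hi hi' p hp hip q hq hiq hvp hvq
      have hnd : q.reverse.support.Nodup := hq.reverse.support_nodup
      have hcons : q.reverse.support = r :: q.reverse.support.tail :=
        q.reverse.support_eq_cons
      rw [hcons] at hnd
      exact (List.nodup_cons.1 hnd).1 (hvr ▸ hvt)
  · rw [SimpleGraph.Walk.mem_support_append_iff]
    exact Or.inl p.end_mem_support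
  · rw [SimpleGraph.Walk.mem_support_append_iff]
    exact Or.inl hip

end Graph


section JTLemmas
variable {U I : Type} [Fintype U] [DecidableEq U] [Fintype I] (J : JT U I)

lemma mem_upSet {u : U} {i r : I} :
    u ∈ upSet J i r ↔ ∃ pth : J.G.Path (J.cl u) r, i ∈ pth.1.support := by
  simp [upSet]

lemma mem_nbr {i r : I} : i ∈ nbr J r ↔ J.G.Adj i r := by simp [nbr]

/-- members of an upstream set have non-root clusters. -/
lemma upSet_cl_ne {u : U} {i r : I} (hadj : J.G.Adj i r) (hu : u ∈ upSet J i r) :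
    J.cl u ≠ r := by
  obtain ⟨pth, hip⟩ := (mem_upSet J).1 hu
  intro hcl
  have hnil : pth.1 = (hcl ▸ SimpleGraph.Walk.nil : J.G.Walk (J.cl u) r) := by
    subst hcl
    exact path_unique J.tree pth.2 SimpleGraph.Walk.IsPath.nil
  subst hcl
  rw [hnil] at hip
  simp only [SimpleGraph.Walk.support_nil, List.mem_singleton] at hip
  subst hip
  exact J.G.loopless.irrefl _ hadj

/-- members of an upstream set that lie in the root cluster lie in the separator. -/
lemma upSet_mem_sep {u : U} {i r : I} (hadj : J.G.Adj i r) (hu : u ∈ upSet J i r)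
    (hC : u ∈ J.C r) : u ∈ sep J i r := by
  obtain ⟨pth, hip⟩ := (mem_upSet J).1 hu
  have hsub := J.runInter (J.cl u) r pth i hip
  have huC : u ∈ J.C (J.cl u) := J.cover u (Finset.mem_insert_self u _)
  exact Finset.mem_inter.2 ⟨hsub (Finset.mem_inter.2 ⟨huC, hC⟩), hC⟩

/-- upstream sets of distinct neighbors are disjoint. -/
lemma upSet_disjoint {u : U} {i i' r : I} (hadj : J.G.Adj i r) (hadj' : J.G.Adj i' r)
    (hne : i ≠ i') (hu : u ∈ upSet J i r) (hu' : u ∈ upSet J i' r) : False := by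
  obtain ⟨pth, hip⟩ := (mem_upSet J).1 hu
  obtain ⟨pth', hip'⟩ := (mem_upSet J).1 hu'
  have : pth.1 = pth'.1 := path_unique J.tree pth.2 pth'.2
  rw [this] at hip
  exact hne (unique_nbr J.tree pth'.1 pth'.2 hadj hadj' hip hip')

/-- every variable with non-root cluster is upstream of some neighbor. -/
lemma exists_upSet {u : U} {r : I} (hcl : J.cl u ≠ r) :
    ∃ i : I, J.G.Adj i r ∧ u ∈ upSet J i r := by
  have hreach : J.G.Reachable (J.cl u) r := J.tree.isConnected.preconnected _ _
  obtain ⟨w⟩ := hreach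
  let pth : J.G.Path (J.cl u) r := w.toPath
  have hne : r ≠ J.cl u := Ne.symm hcl
  obtain ⟨c, hrc, q, hq⟩ := SimpleGraph.Walk.exists_eq_cons_of_ne hne pth.1.reverse
  refine ⟨c, hrc.symm, (mem_upSet J).2 ⟨pth, ?_⟩⟩
  have : c ∈ pth.1.reverse.support := by
    rw [hq, SimpleGraph.Walk.support_cons]
    exact List.mem_cons_of_mem _ q.start_mem_support
  rwa [SimpleGraph.Walk.support_reverse, List.mem_reverse] at this

/-- branch separation: the family of an upstream variable of branch `i` cannot
meet the proper upstream part of another branch `i'`. -/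
lemma branch_sep {u v : U} {i i' r : I} (hadj : J.G.Adj i r) (hadj' : J.G.Adj i' r)
    (hne : i ≠ i') (hu : u ∈ upSet J i r) (hv : v ∈ insert u (J.pa u))
    (hv' : v ∈ upSet J i' r) : v ∈ sep J i' r := by
  obtain ⟨q0, hiq⟩ := (mem_upSet J).1 hu
  obtain ⟨p0, hip⟩ := (mem_upSet J).1 hv'
  by_cases hc : J.cl v = J.cl u
  · exfalso
    have hex : ∃ pth : J.G.Path (J.cl v) r, i' ∈ pth.1.support := ⟨p0, hip⟩
    rw [hc] at hex
    have hu' : u ∈ upSet J i' r := (mem_upSet J).2 hex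
    exact upSet_disjoint J hadj hadj' hne hu hu'
  · obtain ⟨w, hw, hrw, hi'w⟩ :=
      two_branch_path J.tree hne hadj hadj' p0.1 p0.2 hip q0.1 q0.2 hiq
    have hsub_r := J.runInter (J.cl v) (J.cl u) ⟨w, hw⟩ r hrw
    have hsub_i := J.runInter (J.cl v) (J.cl u) ⟨w, hw⟩ i' hi'w
    have hvv : v ∈ J.C (J.cl v) := J.cover v (Finset.mem_insert_self v _)
    have hvu : v ∈ J.C (J.cl u) := J.cover u hv
    have hmem : v ∈ J.C (J.cl v) ∩ J.C (J.cl u) := Finset.mem_inter.2 ⟨hvv, hvu⟩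
    exact Finset.mem_inter.2 ⟨hsub_i hmem, hsub_r hmem⟩

end JTLemmas


section SumLemmas
variable {U : Type} [Fintype U] [DecidableEq U] {D : U → Type}
  [∀ u, Fintype (D u)] [∀ u, DecidableEq (D u)]

/-- reindexing a pinned sum: sums pinned to `z` resp. `w` outside `V` agree provided the
summand is suitably congruent. -/
lemma sum_pin_congr (V : Finset U) (z w : ∀ u, D u) (g : (∀ u, D u) → ℝ)
    (hg : ∀ y y' : ∀ u, D u, (∀ v ∈ V, y v = y' v) → (∀ v, v ∉ V → y v = z v) →
      (∀ v, v ∉ V → y' v = w v) → g y = g y') :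
    (∑ y : ∀ u, D u, if ∀ v, v ∉ V → y v = z v then g y else 0) =
      ∑ y : ∀ u, D u, if ∀ v, v ∉ V → y v = w v then g y else 0 := by
  rw [← Finset.sum_filter, ← Finset.sum_filter]
  refine Finset.sum_bij' (fun y _ => fun v => if v ∈ V then y v else w v)
    (fun y _ => fun v => if v ∈ V then y v else z v) ?_ ?_ ?_ ?_ ?_
  · intro y hy
    simp only [Finset.mem_filter, Finset.mem_univ, true_and]
    intro v hv
    simp [hv]
  · intro y hy
    simp only [Finset.mem_filter, Finset.mem_univ, true_and]
    intro v hv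
    simp [hv]
  · intro y hy
    simp only [Finset.mem_filter, Finset.mem_univ, true_and] at hy
    funext v
    by_cases hv : v ∈ V <;> simp [hv, hy v]
  · intro y hy
    simp only [Finset.mem_filter, Finset.mem_univ, true_and] at hy
    funext v
    by_cases hv : v ∈ V <;> simp [hv, hy v]
  · intro y hy
    simp only [Finset.mem_filter, Finset.mem_univ, true_and] at hy
    refine hg y _ ?_ ?_ ?_
    · intro v hv; simp [hv]
    · exact hy
    · intro v hv; simp [hv]

/-- absorption of one message into the root sum. -/
lemma absorb (A V : Finset U) (x : ∀ u, D u) (hAV : ∀ v ∈ V, v ∉ A)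
    (c g : (∀ u, D u) → ℝ)
    (hc : ∀ z w : ∀ u, D u, (∀ v, v ∉ V → z v = w v) → c z = c w) :
    (∑ z : ∀ u, D u, if ∀ v, v ∉ A → z v = x v then
        c z * (∑ y : ∀ u, D u, if ∀ v, v ∉ V → y v = z v then g y else 0) else 0)
      = ∑ y : ∀ u, D u, if ∀ v, v ∉ A → v ∉ V → y v = x v then c y * g y else 0 := by
  have hstep : ∀ z : ∀ u, D u,
      (if ∀ v, v ∉ A → z v = x v then
        c z * (∑ y : ∀ u, D u, if ∀ v, v ∉ V → y v = z v then g y else 0) else 0)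
      = ∑ y : ∀ u, D u,
          if (∀ v, v ∉ A → z v = x v) ∧ (∀ v, v ∉ V → y v = z v) then c z * g y else 0 := by
    intro z
    by_cases hP : ∀ v, v ∉ A → z v = x v
    · rw [if_pos hP, Finset.mul_sum]
      refine Finset.sum_congr rfl fun y _ => ?_
      rw [mul_ite, mul_zero, if_congr (and_iff_right hP) rfl rfl]
    · rw [if_neg hP, eq_comm, Finset.sum_eq_zero]
      intro y _
      rw [if_neg]
      rintro ⟨h1, _⟩
      exact hP h1
  simp only [hstep]
  rw [Finset.sum_comm]
  refine Finset.sum_congr rfl fun y _ => ?_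
  by_cases hR : ∀ v, v ∉ A → v ∉ V → y v = x v
  · rw [if_pos hR]
    have hz0P : ∀ v, v ∉ A → (fun v => if v ∈ A then y v else x v) v = x v := by
      intro v hv; simp [hv]
    have hz0y : ∀ v, v ∉ V → (fun v => if v ∈ A then y v else x v) v = y v := by
      intro v hv
      by_cases hA : v ∈ A <;> simp [hA, (hR v · hv)]
    rw [Finset.sum_eq_single (fun v => if v ∈ A then y v else x v)]
    · rw [if_pos ⟨hz0P, fun v hv => (hz0y v hv).symm⟩]
      congr 1
      exact hc _ y hz0y
    · intro z _ hzne
      rw [if_neg]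
      rintro ⟨hP, hQ⟩
      refine hzne (funext fun v => ?_)
      by_cases hA : v ∈ A
      · have hvV : v ∉ V := fun hvv => hAV v hvv hA
        simp [hA, (hQ v hvV).symm]
      · simp [hA, hP v hA]
    · intro h
      exact absurd (Finset.mem_univ _) h
  · rw [if_neg hR, Finset.sum_eq_zero]
    intro z _
    rw [if_neg]
    rintro ⟨hP, hQ⟩
    exact hR fun v hvA hvV => (hQ v hvV).trans (hP v hvA)

end SumLemmas


/-- main induction: absorbing messages one branch at a time. -/
lemma jt_main_aux {U I : Type} [Fintype U] [DecidableEq U] [Fintype I]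
    (J : JT U I) {D : U → Type} [∀ u, Fintype (D u)] [∀ u, DecidableEq (D u)]
    (cpd : (u : U) → (∀ v, D v) → ℝ) (ev : (u : U) → Finset (D u))
    (K : (u : U) → (∀ v, D v) → ℝ)
    (hK : ∀ u x, K u x = (if x u ∈ ev u then (1 : ℝ) else 0) * cpd u x)
    (hloc : ∀ u x x', (∀ v ∈ insert u (J.pa u), x v = x' v) → cpd u x = cpd u x')
    (r : I) (x : ∀ u, D u) :
    ∀ (n : ℕ) (s : Finset I), s ⊆ nbr J r → (nbr J r \ s).card = n →
    (∑ z : ∀ u, D u,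
      if ∀ v, v ∉ J.C r ∪ s.biUnion (fun i' => upSet J i' r \ sep J i' r) → z v = x v
      then (∏ u ∈ (Finset.univ.filter fun u => J.cl u = r) ∪ s.biUnion (fun i' => upSet J i' r), K u z)
           * ∏ i' ∈ nbr J r \ s, msg J K i' r z
      else 0)
    = ∑ z : ∀ u, D u, ∏ u : U, K u z := by
  have hKloc : ∀ (u : U) (z w : ∀ v, D v), (∀ v ∈ insert u (J.pa u), z v = w v) →
      K u z = K u w := by
    intro u z w h
    rw [hK, hK, h u (Finset.mem_insert_self u _), hloc u z w h]
  intro n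
  induction n with
  | zero =>
    intro s hsub hcard
    have hs : s = nbr J r :=
      Finset.Subset.antisymm hsub
        (Finset.sdiff_eq_empty_iff_subset.1 (Finset.card_eq_zero.1 hcard))
    subst hs
    have hcov : ∀ v : U,
        v ∈ J.C r ∪ (nbr J r).biUnion (fun i' => upSet J i' r \ sep J i' r) := by
      intro v
      by_cases hcl : J.cl v = r
      · exact Finset.mem_union_left _ (hcl ▸ J.cover v (Finset.mem_insert_self v _))
      · obtain ⟨i, hadj, hv⟩ := exists_upSet J hcl
        by_cases hsep : v ∈ sep J i r
        · exact Finset.mem_union_left _ (Finset.mem_inter.1 hsep).2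
        · exact Finset.mem_union_right _
            (Finset.mem_biUnion.2 ⟨i, (mem_nbr J).2 hadj, Finset.mem_sdiff.2 ⟨hv, hsep⟩⟩)
    have hall : (Finset.univ.filter fun u => J.cl u = r) ∪
        (nbr J r).biUnion (fun i' => upSet J i' r) = Finset.univ := by
      ext u
      simp only [Finset.mem_union, Finset.mem_filter, Finset.mem_univ, true_and,
        Finset.mem_biUnion, iff_true]
      by_cases hcl : J.cl u = r
      · exact Or.inl hcl
      · obtain ⟨i, hadj, hu⟩ := exists_upSet J hcl
        exact Or.inr ⟨i, (mem_nbr J).2 hadj, hu⟩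
    refine Finset.sum_congr rfl fun z _ => ?_
    rw [if_pos (fun v hv => absurd (hcov v) hv), Finset.sdiff_self, Finset.prod_empty,
      mul_one, hall]
  | succ n ih =>
    intro s hsub hcard
    have hne : (nbr J r \ s).Nonempty := Finset.card_pos.1 (by rw [hcard]; exact Nat.succ_pos n)
    obtain ⟨i, hi_mem⟩ := hne
    have hi_nbr : i ∈ nbr J r := (Finset.mem_sdiff.1 hi_mem).1
    have his : i ∉ s := (Finset.mem_sdiff.1 hi_mem).2
    have hadj : J.G.Adj i r := (mem_nbr J).1 hi_nbr
    -- family sets of variables already collected avoid the new branch interior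
    have hfaVi : ∀ u ∈ (Finset.univ.filter fun u => J.cl u = r) ∪
        s.biUnion (fun i' => upSet J i' r),
        ∀ v ∈ insert u (J.pa u), v ∉ upSet J i r \ sep J i r := by
      intro u hu v hv hvVi
      have hvup : v ∈ upSet J i r := (Finset.mem_sdiff.1 hvVi).1
      have hvsep : v ∉ sep J i r := (Finset.mem_sdiff.1 hvVi).2
      rcases Finset.mem_union.1 hu with h1 | h1
      · have hclu : J.cl u = r := (Finset.mem_filter.1 h1).2
        have hvC : v ∈ J.C r := hclu ▸ J.cover u hv
        exact hvsep (upSet_mem_sep J hadj hvup hvC)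
      · obtain ⟨i'', hi''s, hu''⟩ := Finset.mem_biUnion.1 h1
        have hadj'' : J.G.Adj i'' r := (mem_nbr J).1 (hsub hi''s)
        have hne'' : i'' ≠ i := fun e => his (e ▸ hi''s)
        exact hvsep (branch_sep J hadj'' hadj hne'' hu'' hv hvup)
    -- messages of other branches do not depend on the new branch interior
    have hmsg_inv : ∀ i'' : I, J.G.Adj i'' r → i'' ≠ i → ∀ z w : ∀ u, D u,
        (∀ v, v ∉ upSet J i r \ sep J i r → z v = w v) →
        msg J K i'' r z = msg J K i'' r w := by
      intro i'' hadj'' hne'' z w hzw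
      simp only [msg]
      apply sum_pin_congr
      intro y y' hVagree hyz hyw
      refine Finset.prod_congr rfl fun u hu => ?_
      apply hKloc
      intro v hv
      by_cases hvV : v ∈ upSet J i'' r \ sep J i'' r
      · exact hVagree v hvV
      · rw [hyz v hvV, hyw v hvV]
        apply hzw
        intro hvVi
        exact (Finset.mem_sdiff.1 hvVi).2
          (branch_sep J hadj'' hadj hne'' hu hv (Finset.mem_sdiff.1 hvVi).1)
    -- the collected part is invariant under changes inside the new branch interior
    have hc : ∀ z w : ∀ u, D u, (∀ v, v ∉ upSet J i r \ sep J i r → z v = w v) →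
        ((∏ u ∈ (Finset.univ.filter fun u => J.cl u = r) ∪
            s.biUnion (fun i' => upSet J i' r), K u z)
          * ∏ i'' ∈ (nbr J r \ s).erase i, msg J K i'' r z)
        = (∏ u ∈ (Finset.univ.filter fun u => J.cl u = r) ∪
            s.biUnion (fun i' => upSet J i' r), K u w)
          * ∏ i'' ∈ (nbr J r \ s).erase i, msg J K i'' r w := by
      intro z w hzw
      have h1 := Finset.prod_congr rfl fun u hu =>
        hKloc u z w (fun v hv => hzw v (fun hvVi => hfaVi u hu v hv hvVi))
      rw [h1]
      congr 1
      refine Finset.prod_congr rfl fun i'' hi'' => ?_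
      have hi''mem := Finset.mem_erase.1 hi''
      exact hmsg_inv i'' ((mem_nbr J).1 (Finset.mem_sdiff.1 hi''mem.2).1) hi''mem.1 z w hzw
    -- the new branch interior is disjoint from the already-pinned region
    have hAV : ∀ v ∈ upSet J i r \ sep J i r,
        v ∉ J.C r ∪ s.biUnion (fun i' => upSet J i' r \ sep J i' r) := by
      intro v hvVi hvA
      have hvup : v ∈ upSet J i r := (Finset.mem_sdiff.1 hvVi).1
      have hvsep : v ∉ sep J i r := (Finset.mem_sdiff.1 hvVi).2
      rcases Finset.mem_union.1 hvA with h1 | h1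
      · exact hvsep (upSet_mem_sep J hadj hvup h1)
      · obtain ⟨i'', hi''s, hv''⟩ := Finset.mem_biUnion.1 h1
        have hadj'' : J.G.Adj i'' r := (mem_nbr J).1 (hsub hi''s)
        have hne'' : i'' ≠ i := fun e => his (e ▸ hi''s)
        exact upSet_disjoint J hadj hadj'' (fun e => hne'' e.symm) hvup
          (Finset.mem_sdiff.1 hv'').1
    -- split off the message of branch i and absorb it
    have hLHS : (∑ z : ∀ u, D u,
        if ∀ v, v ∉ J.C r ∪ s.biUnion (fun i' => upSet J i' r \ sep J i' r) → z v = x v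
        then (∏ u ∈ (Finset.univ.filter fun u => J.cl u = r) ∪
              s.biUnion (fun i' => upSet J i' r), K u z)
            * ∏ i' ∈ nbr J r \ s, msg J K i' r z
        else 0)
        = ∑ z : ∀ u, D u,
          if ∀ v, v ∉ J.C r ∪ s.biUnion (fun i' => upSet J i' r \ sep J i' r) → z v = x v
          then ((∏ u ∈ (Finset.univ.filter fun u => J.cl u = r) ∪
                s.biUnion (fun i' => upSet J i' r), K u z)
              * ∏ i'' ∈ (nbr J r \ s).erase i, msg J K i'' r z)
            * (∑ y : ∀ u, D u,
                if ∀ v, v ∉ upSet J i r \ sep J i r → y v = z v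
                then ∏ u ∈ upSet J i r, K u y else 0)
          else 0 := by
      refine Finset.sum_congr rfl fun z _ => ?_
      split
      · rw [← Finset.mul_prod_erase _ _ hi_mem]
        simp only [msg]
        ring
      · rfl
    rw [hLHS,
      absorb (J.C r ∪ s.biUnion (fun i' => upSet J i' r \ sep J i' r))
        (upSet J i r \ sep J i r) x hAV
        (fun z => (∏ u ∈ (Finset.univ.filter fun u => J.cl u = r) ∪
            s.biUnion (fun i' => upSet J i' r), K u z)
          * ∏ i'' ∈ (nbr J r \ s).erase i, msg J K i'' r z)
        (fun y => ∏ u ∈ upSet J i r, K u y) hc]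
    -- now rewrite as the statement for `insert i s` and apply the IH
    have hsplit : nbr J r \ insert i s = (nbr J r \ s).erase i := by
      ext j
      simp only [Finset.mem_sdiff, Finset.mem_erase, Finset.mem_insert, not_or]
      tauto
    have hsub' : insert i s ⊆ nbr J r := Finset.insert_subset hi_nbr hsub
    have hcard' : (nbr J r \ insert i s).card = n := by
      rw [hsplit, Finset.card_erase_of_mem hi_mem, hcard]
      omega
    rw [← ih (insert i s) hsub' hcard']
    refine Finset.sum_congr rfl fun y _ => ?_
    have hsetid : J.C r ∪ (insert i s).biUnion (fun i' => upSet J i' r \ sep J i' r)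
        = (J.C r ∪ s.biUnion (fun i' => upSet J i' r \ sep J i' r))
          ∪ (upSet J i r \ sep J i r) := by
      rw [Finset.biUnion_insert,
        Finset.union_comm (upSet J i r \ sep J i r) _, ← Finset.union_assoc]
    have hBdisj : Disjoint ((Finset.univ.filter fun u => J.cl u = r) ∪
        s.biUnion (fun i' => upSet J i' r)) (upSet J i r) := by
      rw [Finset.disjoint_left]
      intro u hu hu'
      rcases Finset.mem_union.1 hu with h1 | h1
      · exact upSet_cl_ne J hadj hu' (Finset.mem_filter.1 h1).2
      · obtain ⟨i'', hi''s, hu''⟩ := Finset.mem_biUnion.1 h1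
        have hadj'' : J.G.Adj i'' r := (mem_nbr J).1 (hsub hi''s)
        have hne'' : i'' ≠ i := fun e => his (e ▸ hi''s)
        exact upSet_disjoint J hadj'' hadj hne'' hu'' hu'
    have hB' : (Finset.univ.filter fun u => J.cl u = r) ∪
        (insert i s).biUnion (fun i' => upSet J i' r)
        = ((Finset.univ.filter fun u => J.cl u = r) ∪
            s.biUnion (fun i' => upSet J i' r)) ∪ upSet J i r := by
      rw [Finset.biUnion_insert,
        Finset.union_comm (upSet J i r) _, ← Finset.union_assoc]
    refine if_congr ?_ ?_ rfl
    · rw [hsetid]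
      constructor
      · intro h v hv
        rw [Finset.mem_union, not_or] at hv
        exact h v hv.1 hv.2
      · intro h v hv1 hv2
        exact h v (by rw [Finset.mem_union, not_or]; exact ⟨hv1, hv2⟩)
    · rw [hB', hsplit, Finset.prod_union hBdisj]
      ring

/-- The evidence probability can be obtained at any single cluster r:
P(E) = ∑_{X_{C_r}} Φ_r(X_{C_r}) ∏_{i ∈ n(r)} M_{i→r}(X_{S_ir}). -/
theorem jt_evidence_at_root {U I : Type} [Fintype U] [DecidableEq U] [Fintype I]
    (J : JT U I) {D : U → Type} [∀ u, Fintype (D u)] [∀ u, DecidableEq (D u)]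
    (cpd : (u : U) → (∀ v, D v) → ℝ) (ev : (u : U) → Finset (D u))
    (K : (u : U) → (∀ v, D v) → ℝ)
    (hK : ∀ u x, K u x = (if x u ∈ ev u then (1 : ℝ) else 0) * cpd u x)
    (hloc : ∀ u x x', (∀ v ∈ insert u (J.pa u), x v = x' v) → cpd u x = cpd u x')
    (r : I) (x : ∀ u, D u) :
    (∑ z : ∀ u, D u, ∏ u : U, K u z) =
      ∑ z : ∀ u, D u,
        if ∀ v, v ∉ J.C r → z v = x v
        then pot J K r z * ∏ i ∈ nbr J r, msg J K i r z else 0 := by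
  have h := jt_main_aux J cpd ev K hK hloc r x (nbr J r \ ∅).card ∅
    (Finset.empty_subset _) rfl
  simp only [Finset.biUnion_empty, Finset.union_empty, Finset.sdiff_empty] at h
  rw [← h]
  refine Finset.sum_congr rfl fun z _ => ?_
  simp only [pot]
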